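/- Let (Ω, ℱ, ℙ) be a probability space, h ≥ 1 and k ≥ 1 integers, σ > 0, and let Γ be an invertible real p × p matrix and M a real p × p matrix. Let ε_1, …, ε_h be square-integrable random variables, mutually independent, each with mean 0 and variance σ²; let δ, Z : Ω → ℝ^p be random vectors with square-integrable coordinates such that δ and Z are independent of each other and the pair (δ, Z) is independent of (ε_1, …, ε_h), with second-moment matrices E[δδᵀ] = (σ²/k) Γ⁻¹ and E[ZZᵀ] = Γ, and with E[δ_i] = 0 for all i. Then for any reals c_0, …, c_{h−1}, E[(−Σ_{j=0}^{h−1} c_j ε_j + δᵀ M Z)²] = σ² Σ_{j=0}^{h−1} c_j² + (σ²/k) · tr(Mᵀ Γ⁻¹ M Γ). In particular, taking c_j = a_1(j), the variance of the h-step forecast error decomposition equals σ_h² + w_h(k), where σ_h² = σ² Σ_{j=0}^{h−1} a_1(j)² and w_h(k) = (σ²/k) tr(Mᵀ Γ⁻¹ M Γ). -/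

import Mathlib

open MeasureTheory ProbabilityTheory


lemma l2_mul_integrable {Ω : Type*} [MeasurableSpace Ω] {μ : Measure Ω}
    {f g : Ω → ℝ} (hf : MemLp f 2 μ) (hg : MemLp g 2 μ) :
    Integrable (fun ω => f ω * g ω) μ := by
  have h1 : MemLp (f • g) 1 μ := hg.smul hf
  rw [memLp_one_iff_integrable] at h1
  exact h1

lemma sum_comm4 {α β γ ξ : Type*} [Fintype α] [Fintype β] [Fintype γ] [Fintype ξ]
    (g : α → β → γ → ξ → ℝ) :
    ∑ b : β, ∑ d : ξ, ∑ c : γ, ∑ a : α, g a b c d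
      = ∑ a : α, ∑ b : β, ∑ c : γ, ∑ d : ξ, g a b c d := by
  have h1 : ∀ (b : β) (d : ξ), ∑ c : γ, ∑ a : α, g a b c d = ∑ a : α, ∑ c : γ, g a b c d :=
    fun b d => Finset.sum_comm
  simp_rw [h1]
  have h2 : ∀ b : β, ∑ d : ξ, ∑ a : α, ∑ c : γ, g a b c d
      = ∑ a : α, ∑ d : ξ, ∑ c : γ, g a b c d := fun b => Finset.sum_comm
  simp_rw [h2]
  rw [Finset.sum_comm]
  have h3 : ∀ (a : α) (b : β), ∑ d : ξ, ∑ c : γ, g a b c d = ∑ c : γ, ∑ d : ξ, g a b c d :=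
    fun a b => Finset.sum_comm
  simp_rw [h3]

lemma trace_quad (p : ℕ) (G Γinv M : Matrix (Fin p) (Fin p) ℝ) :
    Matrix.trace (M.transpose * Γinv * M * G)
    = ∑ i : Fin p, ∑ j : Fin p, ∑ i' : Fin p, ∑ j' : Fin p,
        M i j * M i' j' * (Γinv i i' * G j' j) := by
  simp only [Matrix.trace, Matrix.diag, Matrix.mul_apply, Matrix.transpose_apply,
    Finset.sum_mul]
  rw [← sum_comm4 (fun a b c d => M a b * M c d * (Γinv a c * G d b))]
  exact Finset.sum_congr rfl fun b _ => Finset.sum_congr rfl fun d _ =>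
    Finset.sum_congr rfl fun c _ => Finset.sum_congr rfl fun a _ => by ring

theorem aux_main {Ω : Type*} [MeasurableSpace Ω] (μ : Measure Ω) [IsProbabilityMeasure μ]
    {p h k : ℕ} (hk : 1 ≤ k) {σ : ℝ} (hσ : 0 < σ)
    (Γ M : Matrix (Fin p) (Fin p) ℝ)
    (ε : Fin h → Ω → ℝ)
    (hεL2 : ∀ j : Fin h, MemLp (ε j) 2 μ)
    (hεind : iIndepFun ε μ)
    (hεmean : ∀ j : Fin h, ∫ ω, ε j ω ∂μ = 0)
    (hεvar : ∀ j : Fin h, variance (ε j) μ = σ ^ 2)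
    (δ Z : Ω → Fin p → ℝ)
    (hδL2 : ∀ i : Fin p, MemLp (fun ω => δ ω i) 2 μ)
    (hZL2 : ∀ i : Fin p, MemLp (fun ω => Z ω i) 2 μ)
    (hδZ : IndepFun δ Z μ)
    (hpair : IndepFun (fun ω => (δ ω, Z ω)) (fun ω (j : Fin h) => ε j ω) μ)
    (hδmom : ∀ i j : Fin p, ∫ ω, δ ω i * δ ω j ∂μ = σ ^ 2 / k * Γ⁻¹ i j)
    (hZmom : ∀ i j : Fin p, ∫ ω, Z ω i * Z ω j ∂μ = Γ i j)
    (hδmean : ∀ i : Fin p, ∫ ω, δ ω i ∂μ = 0)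
    (c : Fin h → ℝ) :
    ∫ ω, (-(∑ j : Fin h, c j * ε j ω)
          + ∑ i : Fin p, ∑ j : Fin p, δ ω i * M i j * Z ω j) ^ 2 ∂μ
        = σ ^ 2 * (∑ j : Fin h, c j ^ 2)
          + σ ^ 2 / k * Matrix.trace (M.transpose * Γ⁻¹ * M * Γ) := by
  -- basic integrability facts
  have hεint : ∀ j, Integrable (ε j) μ := fun j => (hεL2 j).integrable one_le_two
  have hεmul : ∀ i j : Fin h, Integrable (fun ω => ε i ω * ε j ω) μ :=
    fun i j => l2_mul_integrable (hεL2 i) (hεL2 j)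
  have hεsq : ∀ j : Fin h, ∫ ω, ε j ω ^ 2 ∂μ = σ ^ 2 := by
    intro j
    have h1 : variance (ε j) μ = (∫ ω, ε j ω ^ 2 ∂μ) - (∫ ω, ε j ω ∂μ) ^ 2 := by
      simpa using variance_eq_sub (hεL2 j)
    rw [hεvar j, hεmean j] at h1; linarith
  have hεcross : ∀ i j : Fin h, i ≠ j → ∫ ω, ε i ω * ε j ω ∂μ = 0 := by
    intro i j hij
    rw [(hεind.indepFun hij).integral_fun_mul_eq_mul_integral (hεL2 i).1 (hεL2 j).1, hεmean i, zero_mul]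
  -- S and T
  set S : Ω → ℝ := fun ω => ∑ j : Fin h, c j * ε j ω with hS
  set T : Ω → ℝ := fun ω => ∑ i : Fin p, ∑ j : Fin p, δ ω i * M i j * Z ω j with hT
  -- E[S^2]
  have hA : ∫ ω, S ω ^ 2 ∂μ = σ ^ 2 * ∑ j : Fin h, c j ^ 2 := by
    have hexp : ∀ ω, S ω ^ 2
        = ∑ i : Fin h, ∑ j : Fin h, (c i * c j) * (ε i ω * ε j ω) := by
      intro ω
      rw [hS, sq, Finset.sum_mul_sum]
      exact Finset.sum_congr rfl fun i _ => Finset.sum_congr rfl fun j _ => by ring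
    simp_rw [hexp]
    rw [integral_finset_sum _ (fun i _ => integrable_finset_sum _
      (fun j _ => ((hεmul i j).const_mul _)))]
    have : ∀ i : Fin h, ∫ ω, ∑ j : Fin h, (c i * c j) * (ε i ω * ε j ω) ∂μ
        = ∑ j : Fin h, (c i * c j) * ∫ ω, ε i ω * ε j ω ∂μ := by
      intro i
      rw [integral_finset_sum _ (fun j _ => ((hεmul i j).const_mul _))]
      exact Finset.sum_congr rfl fun j _ => integral_const_mul _ _
    simp_rw [this]
    have h2 : ∀ i j : Fin h, (c i * c j) * ∫ ω, ε i ω * ε j ω ∂μ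
        = if i = j then c i ^ 2 * σ ^ 2 else 0 := by
      intro i j
      by_cases hij : i = j
      · subst hij
        rw [if_pos rfl]
        have : ∫ ω, ε i ω * ε i ω ∂μ = σ ^ 2 := by
          simpa [sq] using hεsq i
        rw [this]; ring
      · rw [if_neg hij, hεcross i j hij, mul_zero]
    simp_rw [h2]
    simp [Finset.sum_ite_eq, Finset.mul_sum]
    exact Finset.sum_congr rfl fun i _ => by ring
  -- measurability
  have hδm : ∀ i, AEStronglyMeasurable (fun ω => δ ω i) μ := fun i => (hδL2 i).1
  have hZm : ∀ i, AEStronglyMeasurable (fun ω => Z ω i) μ := fun i => (hZL2 i).1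
  have hTm : AEStronglyMeasurable T μ := by
    apply Finset.aestronglyMeasurable_fun_sum
    intro i _
    apply Finset.aestronglyMeasurable_fun_sum
    intro j _
    exact ((hδm i).mul aestronglyMeasurable_const).mul (hZm j)
  have hSm : AEStronglyMeasurable S μ := by
    apply Finset.aestronglyMeasurable_fun_sum
    intro j _
    exact aestronglyMeasurable_const.mul (hεL2 j).1
  have hδZmul : ∀ i j : Fin p, Integrable (fun ω => δ ω i * Z ω j) μ :=
    fun i j => l2_mul_integrable (hδL2 i) (hZL2 j)
  have hTint : Integrable T μ := by
    apply integrable_finset_sum; intro i _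
    apply integrable_finset_sum; intro j _
    have heq : (fun ω => δ ω i * M i j * Z ω j) = fun ω => M i j * (δ ω i * Z ω j) := by
      funext ω; ring
    rw [heq]; exact (hδZmul i j).const_mul _
  have hSint : Integrable S μ := by
    apply integrable_finset_sum; intro j _; exact (hεint j).const_mul _
  have hSmean : ∫ ω, S ω ∂μ = 0 := by
    simp only [hS]
    rw [integral_finset_sum _ (fun j _ => (hεint j).const_mul _)]
    simp [integral_const_mul, hεmean]
  have hTSindep : IndepFun T S μ := by
    have hφ : Measurable (fun v : (Fin p → ℝ) × (Fin p → ℝ) =>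
        ∑ i : Fin p, ∑ j : Fin p, v.1 i * M i j * v.2 j) := by
      apply Finset.measurable_sum; intro i _
      apply Finset.measurable_sum; intro j _
      exact (((measurable_pi_apply i).comp measurable_fst).mul measurable_const).mul
        ((measurable_pi_apply j).comp measurable_snd)
    have hψ : Measurable (fun v : Fin h → ℝ => ∑ j : Fin h, c j * v j) := by
      apply Finset.measurable_sum; intro j _
      exact measurable_const.mul (measurable_pi_apply j)
    exact hpair.comp hφ hψ
  have hC : ∫ ω, T ω * S ω ∂μ = 0 := by
    rw [hTSindep.integral_fun_mul_eq_mul_integral hTm hSm]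
    have : integral μ S = 0 := hSmean
    rw [this, mul_zero]
  -- moments of δ,Z products
  have hZmom' : ∀ i j : Fin p, ∫ ω, Z ω i * Z ω j ∂μ = Γ j i := by
    intro i j
    have heq : (fun ω => Z ω i * Z ω j) = fun ω => Z ω j * Z ω i := by funext ω; ring
    rw [heq]
    exact hZmom j i
  have hδδZZind : ∀ i i' j j' : Fin p,
      IndepFun (fun ω => δ ω i * δ ω i') (fun ω => Z ω j * Z ω j') μ := fun i i' j j' =>
    hδZ.comp ((measurable_pi_apply i).mul (measurable_pi_apply i'))
      ((measurable_pi_apply j).mul (measurable_pi_apply j'))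
  have hterm : ∀ i j i' j' : Fin p,
      ∫ ω, (δ ω i * M i j * Z ω j) * (δ ω i' * M i' j' * Z ω j') ∂μ
        = σ ^ 2 / k * (M i j * M i' j' * (Γ⁻¹ i i' * Γ j' j)) := by
    intro i j i' j'
    have heq : (fun ω => (δ ω i * M i j * Z ω j) * (δ ω i' * M i' j' * Z ω j'))
        = fun ω => (M i j * M i' j') * ((δ ω i * δ ω i') * (Z ω j * Z ω j')) := by
      funext ω; ring
    rw [heq, integral_const_mul,
      (hδδZZind i i' j j').integral_fun_mul_eq_mul_integral ((hδm i).mul (hδm i')) ((hZm j).mul (hZm j')),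
      hδmom i i', hZmom' j j']
    ring
  have hint2 : ∀ q r : Fin p × Fin p,
      Integrable (fun ω => (δ ω q.1 * M q.1 q.2 * Z ω q.2)
        * (δ ω r.1 * M r.1 r.2 * Z ω r.2)) μ := by
    intro q r
    have heq : (fun ω => (δ ω q.1 * M q.1 q.2 * Z ω q.2) * (δ ω r.1 * M r.1 r.2 * Z ω r.2))
        = fun ω => (M q.1 q.2 * M r.1 r.2) * ((δ ω q.1 * δ ω r.1) * (Z ω q.2 * Z ω r.2)) := by
      funext ω; ring
    rw [heq]
    exact ((hδδZZind q.1 r.1 q.2 r.2).integrable_mul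
      (l2_mul_integrable (hδL2 _) (hδL2 _)) (l2_mul_integrable (hZL2 _) (hZL2 _))).const_mul _
  have hexpT : ∀ ω, T ω ^ 2 = ∑ q : Fin p × Fin p, ∑ r : Fin p × Fin p,
      (δ ω q.1 * M q.1 q.2 * Z ω q.2) * (δ ω r.1 * M r.1 r.2 * Z ω r.2) := by
    intro ω
    have h0 : T ω = ∑ q : Fin p × Fin p, δ ω q.1 * M q.1 q.2 * Z ω q.2 := by
      simp only [hT]
      exact (Fintype.sum_prod_type (fun q : Fin p × Fin p => δ ω q.1 * M q.1 q.2 * Z ω q.2)).symm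
    rw [h0, sq, Finset.sum_mul_sum]
  have hT2int : Integrable (fun ω => T ω ^ 2) μ := by
    have heq : (fun ω => T ω ^ 2) = fun ω => ∑ q : Fin p × Fin p, ∑ r : Fin p × Fin p,
        (δ ω q.1 * M q.1 q.2 * Z ω q.2) * (δ ω r.1 * M r.1 r.2 * Z ω r.2) := funext hexpT
    rw [heq]
    exact integrable_finset_sum _ (fun q _ => integrable_finset_sum _ (fun r _ => hint2 q r))
  have hB : ∫ ω, T ω ^ 2 ∂μ
      = σ ^ 2 / k * Matrix.trace (M.transpose * Γ⁻¹ * M * Γ) := by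
    simp_rw [hexpT]
    rw [integral_finset_sum _ (fun q _ => integrable_finset_sum _ (fun r _ => hint2 q r))]
    have h1 : ∀ q : Fin p × Fin p,
        ∫ ω, ∑ r : Fin p × Fin p,
          (δ ω q.1 * M q.1 q.2 * Z ω q.2) * (δ ω r.1 * M r.1 r.2 * Z ω r.2) ∂μ
        = ∑ r : Fin p × Fin p,
            σ ^ 2 / k * (M q.1 q.2 * M r.1 r.2 * (Γ⁻¹ q.1 r.1 * Γ r.2 q.2)) := by
      intro q
      rw [integral_finset_sum _ (fun r _ => hint2 q r)]
      exact Finset.sum_congr rfl fun r _ => hterm q.1 q.2 r.1 r.2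
    simp_rw [h1]
    rw [trace_quad, Finset.mul_sum]
    simp only [Finset.mul_sum, Fintype.sum_prod_type]
  -- L2 of S and integrability of S^2
  have hSL2 : MemLp S 2 μ := by
    have h1 := memLp_finsetSum' (μ := μ) (s := Finset.univ)
      (fun (j : Fin h) (_ : j ∈ Finset.univ) => (hεL2 j).const_mul (c j))
    have heq : (∑ j : Fin h, fun ω : Ω => c j * ε j ω)
        = fun ω : Ω => ∑ j : Fin h, c j * ε j ω := by
      funext ω; simp [Finset.sum_apply]
    rw [hS, ← heq]
    exact h1
  have hS2int : Integrable (fun ω => S ω ^ 2) μ := by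
    have heq : (fun ω => S ω ^ 2) = fun ω => S ω * S ω := by funext ω; ring
    rw [heq]
    exact l2_mul_integrable hSL2 hSL2
  have hTSint : Integrable (fun ω => T ω * S ω) μ := hTSindep.integrable_mul hTint hSint
  -- combine
  have key : ∫ ω, (-(S ω) + T ω) ^ 2 ∂μ
      = σ ^ 2 * (∑ j : Fin h, c j ^ 2)
        + σ ^ 2 / k * Matrix.trace (M.transpose * Γ⁻¹ * M * Γ) := by
    have hexp2 : ∀ ω : Ω, (-(S ω) + T ω) ^ 2
        = (S ω ^ 2 - 2 * (T ω * S ω)) + T ω ^ 2 := fun ω => by ring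
    simp_rw [hexp2]
    have hsub : Integrable (fun ω => S ω ^ 2 - 2 * (T ω * S ω)) μ :=
      hS2int.sub (hTSint.const_mul 2)
    have h2mul : Integrable (fun ω => 2 * (T ω * S ω)) μ := hTSint.const_mul 2
    rw [integral_add hsub hT2int, integral_sub hS2int h2mul, integral_const_mul, hA, hB, hC]
    ring
  exact key

/-- Let `ε₁, …, ε_h` be square-integrable, mutually independent
random variables with mean `0` and variance `σ²`, and let `δ, Z : Ω → ℝ^p` be random
vectors with square-integrable coordinates, independent of each other and (as a pair)
of `(ε₁, …, ε_h)`, with `E[δδᵀ] = (σ²/k) Γ⁻¹`, `E[ZZᵀ] = Γ` and `E[δᵢ] = 0`.  Then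
for any reals `c₀, …, c_{h-1}`,
`E[(-∑_j c_j ε_j + δᵀ M Z)²] = σ² ∑_j c_j² + (σ²/k) tr(Mᵀ Γ⁻¹ M Γ)`;
in particular, taking `c_j = a₁(j)`, the variance of the `h`-step forecast error
decomposition equals `σ_h² + w_h(k)` with `σ_h² = σ² ∑_{j=0}^{h-1} a₁(j)²` and
`w_h(k) = (σ²/k) tr(Mᵀ Γ⁻¹ M Γ)`. -/
theorem forecast_error_variance_decomposition
    {Ω : Type*} [MeasurableSpace Ω] (μ : Measure Ω) [IsProbabilityMeasure μ]
    (p : ℕ) (hp : 1 ≤ p) (φ : Fin p → ℝ)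
    (h k : ℕ) (hh : 1 ≤ h) (hk : 1 ≤ k) (σ : ℝ) (hσ : 0 < σ)
    (Γ M : Matrix (Fin p) (Fin p) ℝ) (hΓ : IsUnit Γ.det)
    (ε : Fin h → Ω → ℝ)
    (hεL2 : ∀ j : Fin h, MemLp (ε j) 2 μ)
    (hεind : iIndepFun ε μ)
    (hεmean : ∀ j : Fin h, ∫ ω, ε j ω ∂μ = 0)
    (hεvar : ∀ j : Fin h, variance (ε j) μ = σ ^ 2)
    (δ Z : Ω → Fin p → ℝ)
    (hδL2 : ∀ i : Fin p, MemLp (fun ω => δ ω i) 2 μ)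
    (hZL2 : ∀ i : Fin p, MemLp (fun ω => Z ω i) 2 μ)
    (hδZ : IndepFun δ Z μ)
    (hpair : IndepFun (fun ω => (δ ω, Z ω)) (fun ω (j : Fin h) => ε j ω) μ)
    (hδmom : ∀ i j : Fin p, ∫ ω, δ ω i * δ ω j ∂μ = σ ^ 2 / k * Γ⁻¹ i j)
    (hZmom : ∀ i j : Fin p, ∫ ω, Z ω i * Z ω j ∂μ = Γ i j)
    (hδmean : ∀ i : Fin p, ∫ ω, δ ω i ∂μ = 0)
    (a1 : ℤ → ℝ)
    (ha1_neg : ∀ j : ℤ, j < 0 → a1 j = 0)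
    (ha1_zero : a1 0 = 1)
    (ha1_rec : ∀ t : ℤ, 1 ≤ t → a1 t = ∑ i : Fin p, φ i * a1 (t - ((i : ℕ) + 1 : ℤ))) :
    (∀ c : Fin h → ℝ,
      ∫ ω, (-(∑ j : Fin h, c j * ε j ω)
          + ∑ i : Fin p, ∑ j : Fin p, δ ω i * M i j * Z ω j) ^ 2 ∂μ
        = σ ^ 2 * (∑ j : Fin h, c j ^ 2)
          + σ ^ 2 / k * Matrix.trace (M.transpose * Γ⁻¹ * M * Γ))
    ∧ (∫ ω, (-(∑ j : Fin h, a1 ((j : ℕ) : ℤ) * ε j ω)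
          + ∑ i : Fin p, ∑ j : Fin p, δ ω i * M i j * Z ω j) ^ 2 ∂μ
        = σ ^ 2 * (∑ j ∈ Finset.range h, a1 (j : ℤ) ^ 2)
          + σ ^ 2 / k * Matrix.trace (M.transpose * Γ⁻¹ * M * Γ)) := by
  constructor
  · intro c
    exact aux_main μ hk hσ Γ M ε hεL2 hεind hεmean hεvar δ Z hδL2 hZL2 hδZ hpair
      hδmom hZmom hδmean c
  · have h1 := aux_main μ hk hσ Γ M ε hεL2 hεind hεmean hεvar δ Z hδL2 hZL2 hδZ hpair
      hδmom hZmom hδmean (fun j : Fin h => a1 ((j : ℕ) : ℤ))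
    rw [h1]
    congr 1
    congr 1
    exact Fin.sum_univ_eq_sum_range (fun j => a1 (j : ℤ) ^ 2) h
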